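/- Energy estimate for the weighted Mourre inequality: let H be self-adjoint, P⊥ an orthogonal projection commuting with H, E the spectral projection of H onto an open interval I, and B', C bounded self-adjoint operators with C injective, σ ∈ {−1, +1} with σ B' ≥ 0, and C B' C⁻¹ bounded. Assume the strict weighted projected Mourre estimate P⊥ E [H, i B'] E P⊥ ≥ P⊥ E C² E P⊥ (as forms). Then for every u with E P⊥ u = u and (H - z) u in the range of C, where Re z ∈ I and −σ Im z > 0, one has ‖C u‖ ≤ 2 ‖C B' C⁻¹‖ · ‖C⁻¹ (H - z) u‖. -/

import Mathlib

open scoped InnerProductSpace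

/-- energy estimate for the weighted Mourre inequality: let `H` be self-adjoint,
`P⊥` an orthogonal projection commuting with `H`, `E` the spectral projection of `H` onto an
open interval `I`, `B', C` bounded self-adjoint with `C` injective, `σ ∈ {-1,1}` with
`σ B' ≥ 0`, and `C B' C⁻¹` bounded (extension `B₁`, `B₁ ∘ C = C ∘ B'`).  Under the strict
weighted projected Mourre estimate `P⊥ E [H, iB'] E P⊥ ≥ P⊥ E C² E P⊥` (as forms), for any
`u ∈ D(H)` with `E P⊥ u = u`, and `z` with `Re z ∈ I`, `-σ Im z > 0`, and `(H - z) u = C w`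
in the range of `C`, one has `‖C u‖ ≤ 2 ‖C B' C⁻¹‖ ‖C⁻¹ (H - z) u‖`. -/
theorem stmt_3 {ℋ : Type*} [NormedAddCommGroup ℋ] [InnerProductSpace ℂ ℋ] [CompleteSpace ℋ]
    (H : ℋ →ₗ.[ℂ] ℋ) (hH : IsSelfAdjoint H)
    (I : Set ℝ) (hI : IsOpen I)
    -- `E = E_I(H)` and `P⊥`, commuting orthogonal projections commuting with `H`
    (E Pperp : ℋ →L[ℂ] ℋ)
    (hEsa : IsSelfAdjoint E) (hEidem : E ∘L E = E)
    (hPsa : IsSelfAdjoint Pperp) (hPidem : Pperp ∘L Pperp = Pperp)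
    (hEP : E ∘L Pperp = Pperp ∘L E)
    (hEH : ∀ u : H.domain, ∃ h : E u ∈ H.domain, H ⟨E u, h⟩ = E (H u))
    (hPH : ∀ u : H.domain, ∃ h : Pperp u ∈ H.domain, H ⟨Pperp u, h⟩ = Pperp (H u))
    -- `B'`, `C` bounded self-adjoint, `C` injective
    (B' C : ℋ →L[ℂ] ℋ) (hBsa : IsSelfAdjoint B')
    (hCsa : IsSelfAdjoint C) (hCinj : Function.Injective C)
    -- `σ ∈ {-1, 1}` with `σ B' ≥ 0`
    (σ : ℝ) (hσ : σ = 1 ∨ σ = -1) (hpos : (σ • B').IsPositive)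
    -- `C B' C⁻¹` extends to the bounded operator `B₁`
    (B₁ : ℋ →L[ℂ] ℋ) (hB₁ : ∀ x, B₁ (C x) = C (B' x))
    -- strict weighted projected Mourre estimate, as forms
    (hMourre : ∀ u : H.domain, E (Pperp u) = (u : ℋ) →
        ‖C u‖ ^ 2 ≤ (Complex.I * (⟪H u, B' u⟫_ℂ - ⟪B' u, H u⟫_ℂ)).re) :
    ∀ (u : H.domain) (z : ℂ) (w : ℋ), z.re ∈ I → 0 < -σ * z.im →
      E (Pperp u) = (u : ℋ) → C w = H u - z • (u : ℋ) →
      ‖C u‖ ≤ 2 * ‖B₁‖ * ‖w‖ := by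
  intro u z w hzre hzim hEPu hCw
  have hMu := hMourre u hEPu
  set t : ℂ := ⟪H u, B' u⟫_ℂ with ht
  -- the Mourre RHS equals -2 Im t
  have h1 : ⟪B' (u : ℋ), H u⟫_ℂ = starRingEnd ℂ t := (inner_conj_symm _ _).symm
  have h2 : (Complex.I * (t - starRingEnd ℂ t)).re = -2 * t.im := by
    simp [Complex.mul_re, Complex.sub_im, Complex.sub_re]; ring
  rw [h1, h2] at hMu
  -- b = ⟪u, B' u⟫ is real
  set b : ℂ := ⟪(u : ℋ), B' (u : ℋ)⟫_ℂ with hb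
  have hbreal : b.im = 0 := by
    have h4 : starRingEnd ℂ b = b := by
      rw [hb, inner_conj_symm]
      conv_lhs => rw [← hBsa.adjoint_eq]
      exact ContinuousLinearMap.adjoint_inner_left _ _ _
    have h5 := congrArg Complex.im h4
    simp only [Complex.conj_im] at h5
    linarith
  -- sign condition: z.im * b.re ≤ 0
  have hbsign : 0 ≤ σ * b.re := by
    have h5 := hpos.inner_nonneg_right (𝕜 := ℂ) (u : ℋ)
    have h6 : ⟪(u : ℋ), (σ • B') (u : ℋ)⟫_ℂ = (σ : ℂ) * b := by
      rw [hb, ContinuousLinearMap.smul_apply,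
        RCLike.real_smul_eq_coe_smul (K := ℂ) σ (B' (u : ℋ)), inner_smul_right]
      rfl
    rw [h6] at h5
    simpa [Complex.mul_re] using (Complex.le_def.mp h5).1
  have hsign : z.im * b.re ≤ 0 := by
    have h3 : σ * z.im < 0 := by linarith [hzim]
    rcases hσ with h | h <;> subst h <;> nlinarith
  -- expand t
  have hHu : H u = C w + z • (u : ℋ) := by
    rw [hCw]; abel
  have htexp : t = ⟪C w, B' (u : ℋ)⟫_ℂ + starRingEnd ℂ z * b := by
    rw [ht, hHu, inner_add_left, inner_smul_left, hb]
  have htim : t.im = (⟪C w, B' (u : ℋ)⟫_ℂ).im - z.im * b.re := by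
    rw [htexp]; simp [Complex.add_im, Complex.mul_im, hbreal]; ring
  -- rewrite the key inner product
  have hkey : ⟪C w, B' (u : ℋ)⟫_ℂ = ⟪w, B₁ (C (u : ℋ))⟫_ℂ := by
    rw [hB₁]
    conv_lhs => rw [← hCsa.adjoint_eq]
    exact ContinuousLinearMap.adjoint_inner_left _ _ _
  have habs : |(⟪C w, B' (u : ℋ)⟫_ℂ).im| ≤ ‖B₁‖ * ‖C (u : ℋ)‖ * ‖w‖ := by
    rw [hkey]
    calc |(⟪w, B₁ (C (u : ℋ))⟫_ℂ).im| ≤ ‖⟪w, B₁ (C (u : ℋ))⟫_ℂ‖ := Complex.abs_im_le_norm _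
      _ ≤ ‖w‖ * ‖B₁ (C (u : ℋ))‖ := norm_inner_le_norm _ _
      _ ≤ ‖w‖ * (‖B₁‖ * ‖C (u : ℋ)‖) := by
          gcongr; exact B₁.le_opNorm _
      _ = ‖B₁‖ * ‖C (u : ℋ)‖ * ‖w‖ := by ring
  -- combine
  have hsq : ‖C (u : ℋ)‖ ^ 2 ≤ 2 * ‖B₁‖ * ‖w‖ * ‖C (u : ℋ)‖ := by
    have := abs_le.mp habs
    calc ‖C (u : ℋ)‖ ^ 2 ≤ -2 * t.im := hMu
      _ = -2 * (⟪C w, B' (u : ℋ)⟫_ℂ).im + 2 * (z.im * b.re) := by rw [htim]; ring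
      _ ≤ -2 * (⟪C w, B' (u : ℋ)⟫_ℂ).im := by linarith
      _ ≤ 2 * (‖B₁‖ * ‖C (u : ℋ)‖ * ‖w‖) := by linarith [this.1]
      _ = 2 * ‖B₁‖ * ‖w‖ * ‖C (u : ℋ)‖ := by ring
  rcases eq_or_lt_of_le (norm_nonneg (C (u : ℋ))) with h | h
  · rw [← h]; positivity
  · nlinarith [hsq]
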